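/- Best uniform approximation of 1/x: for any 0 < ℓ < r and positive integer L, letting δ = ℓ/r, the best uniform approximation error of the function x ↦ 1/x on [ℓ, r] by polynomials of degree at most L equals (1/2)·((1+√δ)²/ℓ)·(1 − 2√δ/(1+√δ))^{L+1}. -/

import Mathlib

open Polynomial Real

private lemma bai_natDegree_T_le : ∀ k : ℕ, (Polynomial.Chebyshev.T ℝ (k : ℤ)).natDegree ≤ k := by
  intro k
  induction k using Nat.twoStepInduction with
  | zero => simp [Polynomial.Chebyshev.T_zero]
  | one => simp [Polynomial.Chebyshev.T_one]
  | more k ih1 ih2 =>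
    have h : ((k + 2 : ℕ) : ℤ) = (k : ℤ) + 2 := by push_cast; ring
    have h1 : ((k + 1 : ℕ) : ℤ) = (k : ℤ) + 1 := by push_cast; ring
    rw [h, Polynomial.Chebyshev.T_add_two]
    refine le_trans (Polynomial.natDegree_sub_le _ _) ?_
    have hX : (2 * X : ℝ[X]).natDegree ≤ 1 :=
      le_trans Polynomial.natDegree_mul_le (by simp)
    have h2 : (2 * X * Polynomial.Chebyshev.T ℝ ((k:ℤ) + 1)).natDegree ≤ k + 2 := by
      refine le_trans Polynomial.natDegree_mul_le ?_
      rw [← h1]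
      omega
    have h3 : (Polynomial.Chebyshev.T ℝ (k:ℤ)).natDegree ≤ k + 2 := le_trans ih1 (by omega)
    omega

private lemma bai_T_eval_half (z : ℝ) (hz : z ≠ 0) : ∀ k : ℕ,
    (Polynomial.Chebyshev.T ℝ (k : ℤ)).eval ((z + z⁻¹)/2) = (z^k + z⁻¹^k)/2 := by
  intro k
  induction k using Nat.twoStepInduction with
  | zero => simp [Polynomial.Chebyshev.T_zero]
  | one => simp [Polynomial.Chebyshev.T_one]
  | more k ih1 ih2 =>
    have h : ((k + 2 : ℕ) : ℤ) = (k : ℤ) + 2 := by push_cast; ring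
    have h1 : ((k + 1 : ℕ) : ℤ) = (k : ℤ) + 1 := by push_cast; ring
    rw [h, Polynomial.Chebyshev.T_add_two]
    simp only [Polynomial.eval_sub, Polynomial.eval_mul, Polynomial.eval_X,
      Polynomial.eval_ofNat]
    rw [← h1, ih2, ih1]
    field_simp
    linear_combination (z⁻¹^k * (z - z⁻¹)) * mul_inv_cancel₀ hz

noncomputable def baiPg (σ θ : ℝ) : ℝ :=
  Real.arccos ((Real.cos θ + σ) / Real.sqrt (1 + 2*σ*Real.cos θ + σ^2))

private lemma bai_A_pos (σ θ : ℝ) (h0 : 0 < σ) (h1 : σ < 1) :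
    0 < 1 + 2*σ*Real.cos θ + σ^2 := by
  nlinarith [Real.neg_one_le_cos θ, Real.cos_le_one θ]

private lemma bai_phase_eq (σ θ : ℝ) (h0 : 0 < σ) (h1 : σ < 1) (hθ0 : 0 ≤ θ) (hθπ : θ ≤ π) :
    Complex.exp (θ * Complex.I) + (σ : ℂ) =
      (Real.sqrt (1 + 2*σ*Real.cos θ + σ^2) : ℝ) * Complex.exp ((baiPg σ θ : ℝ) * Complex.I) := by
  have hApos : 0 < 1 + 2*σ*Real.cos θ + σ^2 := bai_A_pos σ θ h0 h1
  set A := 1 + 2*σ*Real.cos θ + σ^2 with hA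
  have hsA : 0 < Real.sqrt A := Real.sqrt_pos.2 hApos
  have hsq : Real.sqrt A ^ 2 = A := Real.sq_sqrt hApos.le
  have hub : (Real.cos θ + σ)^2 ≤ A := by nlinarith [Real.sin_sq_add_cos_sq θ]
  have habs : |Real.cos θ + σ| ≤ Real.sqrt A := by
    rw [← Real.sqrt_sq_eq_abs]; exact Real.sqrt_le_sqrt hub
  have habs2 : |(Real.cos θ + σ)/Real.sqrt A| ≤ 1 := by
    rw [abs_div, abs_of_pos hsA, div_le_one hsA]; exact habs
  obtain ⟨hu2, hu1⟩ := abs_le.1 habs2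
  have hcosg : Real.cos (baiPg σ θ) = (Real.cos θ + σ)/Real.sqrt A := Real.cos_arccos hu2 hu1
  have hsinθ : 0 ≤ Real.sin θ := Real.sin_nonneg_of_nonneg_of_le_pi hθ0 hθπ
  have hsing : Real.sin (baiPg σ θ) = Real.sin θ / Real.sqrt A := by
    rw [baiPg, ← hA, Real.sin_arccos]
    have h2 : 1 - ((Real.cos θ + σ)/Real.sqrt A)^2 = (Real.sin θ / Real.sqrt A)^2 := by
      field_simp
      nlinarith [Real.sin_sq_add_cos_sq θ]
    rw [h2, Real.sqrt_sq (div_nonneg hsinθ hsA.le)]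
  rw [Complex.exp_mul_I, Complex.exp_mul_I]
  rw [show Complex.cos (θ:ℂ) = ((Real.cos θ : ℝ) : ℂ) by rw [Complex.ofReal_cos],
      show Complex.sin (θ:ℂ) = ((Real.sin θ : ℝ) : ℂ) by rw [Complex.ofReal_sin],
      show Complex.cos ((baiPg σ θ : ℝ):ℂ) = ((Real.cos (baiPg σ θ) : ℝ) : ℂ) by
        rw [Complex.ofReal_cos],
      show Complex.sin ((baiPg σ θ : ℝ):ℂ) = ((Real.sin (baiPg σ θ) : ℝ) : ℂ) by
        rw [Complex.ofReal_sin],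
      hcosg, hsing]
  have hsAne : (Real.sqrt A : ℝ) ≠ 0 := ne_of_gt hsA
  apply Complex.ext <;> simp <;> field_simp

private lemma bai_key_identity (σ θ : ℝ) (h0 : 0 < σ) (h1 : σ < 1) (hθ0 : 0 ≤ θ) (hθπ : θ ≤ π)
    (m : ℕ) :
    Real.cos ((m+2)*θ) + 2*σ*Real.cos ((m+1)*θ) + σ^2*Real.cos (m*θ)
      = (1 + 2*σ*Real.cos θ + σ^2) * Real.cos (m*θ + 2 * baiPg σ θ) := by
  have hApos : 0 < 1 + 2*σ*Real.cos θ + σ^2 := bai_A_pos σ θ h0 h1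
  set A := 1 + 2*σ*Real.cos θ + σ^2 with hA
  set z := Complex.exp ((θ:ℂ) * Complex.I) with hz
  have hzk : ∀ k : ℕ, z^k = Complex.exp (((k*θ : ℝ):ℂ) * Complex.I) := by
    intro k
    rw [hz, ← Complex.exp_nat_mul]
    push_cast
    ring_nf
  have hre : ∀ k : ℕ, (z^k).re = Real.cos (k*θ) := by
    intro k; rw [hzk k]; exact Complex.exp_ofReal_mul_I_re _
  have hph : z^m * (z + (σ:ℂ))^2
      = ((A : ℝ):ℂ) * Complex.exp (((m*θ + 2*baiPg σ θ : ℝ):ℂ) * Complex.I) := by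
    have hexp : Complex.exp (((m*θ:ℝ):ℂ) * Complex.I) *
        Complex.exp (((baiPg σ θ:ℝ):ℂ) * Complex.I + ((baiPg σ θ:ℝ):ℂ) * Complex.I)
        = Complex.exp (((m*θ + 2*baiPg σ θ : ℝ):ℂ) * Complex.I) := by
      rw [← Complex.exp_add]; congr 1; push_cast; ring
    have hsq2 : ((Real.sqrt A : ℝ):ℂ)^2 = ((A:ℝ):ℂ) := by
      norm_cast; exact Real.sq_sqrt hApos.le
    rw [bai_phase_eq σ θ h0 h1 hθ0 hθπ, hzk m, mul_pow,
      sq (Complex.exp (((baiPg σ θ : ℝ):ℂ) * Complex.I)),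
      ← Complex.exp_add, mul_left_comm, hexp, hsq2]
  have hsplit : z^(m+2) + 2*(σ:ℂ)*z^(m+1) + (σ:ℂ)^2*z^m = z^m * (z + (σ:ℂ))^2 := by ring
  have hcast : z^(m+2) + 2*(σ:ℂ)*z^(m+1) + (σ:ℂ)^2*z^m
      = z^(m+2) + ((2*σ : ℝ):ℂ)*z^(m+1) + ((σ^2 : ℝ):ℂ)*z^m := by push_cast; ring
  have hre2 : (z^(m+2) + 2*(σ:ℂ)*z^(m+1) + (σ:ℂ)^2*z^m).re
      = Real.cos ((m+2)*θ) + 2*σ*Real.cos ((m+1)*θ) + σ^2*Real.cos (m*θ) := by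
    rw [hcast]
    simp only [Complex.add_re, Complex.re_ofReal_mul, hre]
    push_cast
    ring
  rw [← hre2, hsplit, hph]
  rw [Complex.re_ofReal_mul, Complex.exp_ofReal_mul_I_re]

private lemma bai_bridge1 (ℓ r s σ T K : ℝ) (hℓ : 0 < ℓ) (hℓr : ℓ < r) (hs0 : 0 < s)
    (hs1 : s < 1) (hs2 : s^2 = ℓ/r) (hσ : σ = (1-s)/(1+s)) :
    ((1+s)^2/ℓ * K / 2) * (((r-ℓ)*T + (r+ℓ))/2) = (2*K/(1-σ^2)^2) * (1 + 2*σ*T + σ^2) := by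
  have hr0 : 0 < r := lt_trans hℓ hℓr
  have h1s : (0:ℝ) < 1 + s := by linarith
  have hs' : s ≠ 0 := ne_of_gt hs0
  have h1s' : (1:ℝ) + s ≠ 0 := ne_of_gt h1s
  have hℓ' : ℓ ≠ 0 := ne_of_gt hℓ
  have hr : r = ℓ/s^2 := by
    rw [hs2]; field_simp
  have hσ2 : 1 - σ^2 = 4*s/(1+s)^2 := by rw [hσ]; field_simp; ring
  rw [hσ2, hσ, hr]
  field_simp
  ring

private lemma bai_bridge2 (ℓ r s σ : ℝ) (hℓ : 0 < ℓ) (hℓr : ℓ < r) (hs0 : 0 < s) (hs1 : s < 1)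
    (hs2 : s^2 = ℓ/r) (hσ : σ = (1-s)/(1+s)) :
    (2*0 - (r+ℓ))/(r-ℓ) = ((-σ) + (-σ)⁻¹)/2 := by
  have hr0 : 0 < r := lt_trans hℓ hℓr
  have h1s : (0:ℝ) < 1 + s := by linarith
  have hs' : s ≠ 0 := ne_of_gt hs0
  have h1s' : (1:ℝ) + s ≠ 0 := ne_of_gt h1s
  have h1s'' : (1:ℝ) - s ≠ 0 := by intro h; nlinarith
  have hℓ' : ℓ ≠ 0 := ne_of_gt hℓ
  have hr : r = ℓ/s^2 := by rw [hs2]; field_simp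
  have hrl : r - ℓ ≠ 0 := by intro h; nlinarith
  have hne : ℓ - ℓ*s^2 ≠ 0 := by
    have h2 : 0 < ℓ*((1-s)*(1+s)) := mul_pos hℓ (mul_pos (by linarith) h1s)
    intro h; nlinarith
  rw [hσ, hr, inv_neg, inv_div]
  field_simp [hne]
  rw [div_eq_iff (by intro h; nlinarith : (1:ℝ) - s^2 ≠ 0)]; ring

private lemma bai_bridge3 (σ : ℝ) (h0 : 0 < σ) (h1 : σ < 1) (m : ℕ) :
    ((-1:ℝ))^(m+2) * (2*σ^(m+2)/(1-σ^2)^2) *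
      ( ((-σ)^(m+2) + ((-σ)⁻¹)^(m+2))/2 + 2*σ*(((-σ)^(m+1) + ((-σ)⁻¹)^(m+1))/2)
        + σ^2*(((-σ)^m + ((-σ)⁻¹)^m)/2) ) = 1 := by
  have hσne : σ ≠ 0 := ne_of_gt h0
  have hσ2 : (1:ℝ) - σ^2 ≠ 0 := by nlinarith
  rw [inv_neg]
  rcases Nat.even_or_odd m with he | ho
  · have h2 : Even (m+2) := he.add even_two
    have h1' : Odd (m+1) := Even.add_one he
    simp only [he.neg_pow, h2.neg_pow, h1'.neg_pow, h2.neg_one_pow, inv_pow]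
    field_simp
    ring
  · have h2 : Odd (m+2) := by
      rcases ho with ⟨k, hk⟩; exact ⟨k+1, by omega⟩
    have h1' : Even (m+1) := Odd.add_one ho
    simp only [ho.neg_pow, h2.neg_pow, h1'.neg_pow, h2.neg_one_pow, inv_pow]
    field_simp
    ring

set_option maxHeartbeats 1600000

/-- Best uniform polynomial approximation of 1/x on [ℓ, r]:
2 E_L(1/x; [ℓ,r]) = ((1+√δ)²/ℓ)(1 − 2√δ/(1+√δ))^{L+1} with δ = ℓ/r. -/
theorem best_approx_inv
    (ℓ r : ℝ) (hℓ : 0 < ℓ) (hℓr : ℓ < r) (L : ℕ) (hL : 0 < L) :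
    2 * sInf {e : ℝ | ∃ p : Polynomial ℝ, p.natDegree ≤ L ∧
        e = ⨆ x : Set.Icc ℓ r, |Polynomial.eval (x : ℝ) p - 1 / (x : ℝ)|}
      = ((1 + Real.sqrt (ℓ / r)) ^ 2 / ℓ) *
          (1 - 2 * Real.sqrt (ℓ / r) / (1 + Real.sqrt (ℓ / r))) ^ (L + 1) := by
  obtain ⟨m, rfl⟩ : ∃ m, L = m + 1 := ⟨L - 1, (Nat.succ_pred_eq_of_pos hL).symm⟩
  have hr0 : 0 < r := lt_trans hℓ hℓr
  have hδ0 : 0 < ℓ/r := div_pos hℓ hr0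
  have hδ1 : ℓ/r < 1 := (div_lt_one hr0).2 hℓr
  set s := Real.sqrt (ℓ/r) with hs_def
  have hs0 : 0 < s := Real.sqrt_pos.2 hδ0
  have hs2 : s^2 = ℓ/r := Real.sq_sqrt hδ0.le
  have hs1 : s < 1 := by nlinarith
  set σ := (1-s)/(1+s) with hσ_def
  have h1s : (0:ℝ) < 1 + s := by linarith
  have hσ0 : 0 < σ := div_pos (by linarith) h1s
  have hσ1 : σ < 1 := (div_lt_one h1s).2 (by linarith)
  have hσsq : (0:ℝ) < 1 - σ^2 := by nlinarith
  set E := (1+s)^2/ℓ * σ^(m+2) / 2 with hE_def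
  have hE0 : 0 < E := by positivity
  set d0 := 2*σ^(m+2)/(1-σ^2)^2 with hd0_def
  have hd00 : 0 < d0 := by positivity
  have hrℓ : (0:ℝ) < r - ℓ := by linarith
  -- the polynomials
  set lin : Polynomial ℝ :=
    Polynomial.C (2/(r-ℓ)) * Polynomial.X + Polynomial.C (-(r+ℓ)/(r-ℓ)) with hlin_def
  have hlin_eval : ∀ x : ℝ, lin.eval x = (2*x - (r+ℓ))/(r-ℓ) := by
    intro x
    simp only [hlin_def, Polynomial.eval_add, Polynomial.eval_mul, Polynomial.eval_C,
      Polynomial.eval_X]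
    field_simp
    ring
  set HP : Polynomial ℝ := Polynomial.C ((-1:ℝ)^(m+2) * d0) *
      (Polynomial.Chebyshev.T ℝ ((m+2 : ℕ) : ℤ)
        + Polynomial.C (2*σ) * Polynomial.Chebyshev.T ℝ ((m+1 : ℕ) : ℤ)
        + Polynomial.C (σ^2) * Polynomial.Chebyshev.T ℝ ((m : ℕ) : ℤ)) with hHP_def
  set Hc := HP.comp lin with hHc_def
  set xof : ℝ → ℝ := fun θ => ((r-ℓ)*Real.cos θ + (r+ℓ))/2 with hxof_def
  have hlin_xof : ∀ θ : ℝ, lin.eval (xof θ) = Real.cos θ := by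
    intro θ
    rw [hlin_eval]
    simp only [hxof_def]
    field_simp
    ring
  have hHc_evalθ : ∀ θ : ℝ, Hc.eval (xof θ) = (-1:ℝ)^(m+2) * d0 *
      (Real.cos ((m+2)*θ) + 2*σ*Real.cos ((m+1)*θ) + σ^2*Real.cos (m*θ)) := by
    intro θ
    rw [hHc_def, Polynomial.eval_comp, hlin_xof θ]
    simp only [hHP_def, Polynomial.eval_mul, Polynomial.eval_add, Polynomial.eval_C,
      Polynomial.Chebyshev.T_real_cos]
    push_cast
    ring
  have hExof : ∀ θ : ℝ, E * xof θ = d0 * (1 + 2*σ*Real.cos θ + σ^2) := by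
    intro θ
    exact bai_bridge1 ℓ r s σ (Real.cos θ) (σ^(m+2)) hℓ hℓr hs0 hs1 hs2 hσ_def
  -- eval at 0
  have hHc0 : Hc.eval 0 = 1 := by
    have hzne : -σ ≠ 0 := neg_ne_zero.2 (ne_of_gt hσ0)
    have hlin0 : lin.eval 0 = ((-σ) + (-σ)⁻¹)/2 := by
      rw [hlin_eval]
      exact bai_bridge2 ℓ r s σ hℓ hℓr hs0 hs1 hs2 hσ_def
    rw [hHc_def, Polynomial.eval_comp, hlin0]
    simp only [hHP_def, Polynomial.eval_mul, Polynomial.eval_add, Polynomial.eval_C]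
    rw [bai_T_eval_half (-σ) hzne (m+2), bai_T_eval_half (-σ) hzne (m+1),
      bai_T_eval_half (-σ) hzne m]
    exact bai_bridge3 σ hσ0 hσ1 m
  -- the approximating polynomial q
  have hdvd : Polynomial.X ∣ (1 - Hc) := by
    rw [Polynomial.X_dvd_iff, Polynomial.coeff_zero_eq_eval_zero]
    simp [hHc0]
  obtain ⟨q, hq⟩ := hdvd
  have hq_eval : ∀ x : ℝ, x ≠ 0 → q.eval x - 1/x = -(Hc.eval x)/x := by
    intro x hx
    have h := congrArg (Polynomial.eval x) hq
    simp only [Polynomial.eval_sub, Polynomial.eval_one, Polynomial.eval_mul,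
      Polynomial.eval_X] at h
    field_simp
    linarith [h]
  -- degrees
  have hlin_deg : lin.natDegree ≤ 1 := by
    rw [hlin_def]
    exact le_trans (Polynomial.natDegree_add_le _ _)
      (max_le (le_trans (Polynomial.natDegree_C_mul_le _ _) (by simp)) (by simp))
  have hHP_deg : HP.natDegree ≤ m+2 := by
    rw [hHP_def]
    refine le_trans (Polynomial.natDegree_C_mul_le _ _) ?_
    refine le_trans (Polynomial.natDegree_add_le _ _) ?_
    refine max_le (le_trans (Polynomial.natDegree_add_le _ _) (max_le ?_ ?_)) ?_
    · exact bai_natDegree_T_le (m+2)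
    · exact le_trans (Polynomial.natDegree_C_mul_le _ _)
        (le_trans (bai_natDegree_T_le (m+1)) (by omega))
    · exact le_trans (Polynomial.natDegree_C_mul_le _ _)
        (le_trans (bai_natDegree_T_le m) (by omega))
  have hHc_deg : Hc.natDegree ≤ m+2 := by
    rw [hHc_def]
    refine le_trans Polynomial.natDegree_comp_le ?_
    calc HP.natDegree * lin.natDegree ≤ (m+2) * 1 := Nat.mul_le_mul hHP_deg hlin_deg
    _ = m+2 := by ring
  have hq_deg : q.natDegree ≤ m+1 := by
    by_cases hq0 : q = 0
    · simp [hq0]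
    · have h1 : (Polynomial.X * q).natDegree = q.natDegree + 1 := Polynomial.natDegree_X_mul hq0
      have h2 : (1 - Hc).natDegree ≤ m+2 :=
        le_trans (Polynomial.natDegree_sub_le _ _) (max_le (by simp) hHc_deg)
      rw [hq, h1] at h2
      omega
  -- every point of [ℓ,r] is xof θ
  have herr : ∀ x ∈ Set.Icc ℓ r, ∃ θ : ℝ, 0 ≤ θ ∧ θ ≤ π ∧ x = xof θ := by
    intro x hx
    have ht1 : -1 ≤ (2*x - (r+ℓ))/(r-ℓ) := by
      rw [le_div_iff₀ hrℓ]; linarith [hx.1]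
    have ht2 : (2*x - (r+ℓ))/(r-ℓ) ≤ 1 := by
      rw [div_le_iff₀ hrℓ]; linarith [hx.2]
    refine ⟨Real.arccos ((2*x - (r+ℓ))/(r-ℓ)), Real.arccos_nonneg _, Real.arccos_le_pi _, ?_⟩
    simp only [hxof_def]
    rw [Real.cos_arccos ht1 ht2]
    field_simp
    ring
  have hkey : ∀ θ : ℝ, 0 ≤ θ → θ ≤ π → Hc.eval (xof θ) =
      (-1:ℝ)^(m+2) * d0 * ((1 + 2*σ*Real.cos θ + σ^2) * Real.cos (m*θ + 2*baiPg σ θ)) := by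
    intro θ h0 h1
    rw [hHc_evalθ θ, bai_key_identity σ θ hσ0 hσ1 h0 h1 m]
  have hxof_pos : ∀ θ : ℝ, 0 < xof θ := by
    intro θ
    have := Real.neg_one_le_cos θ
    simp only [hxof_def]
    nlinarith
  have hbound : ∀ x ∈ Set.Icc ℓ r, |q.eval x - 1/x| ≤ E := by
    intro x hx
    obtain ⟨θ, hθ0, hθπ, rfl⟩ := herr x hx
    have hx0 : (0:ℝ) < xof θ := hxof_pos θ
    have hApos := bai_A_pos σ θ hσ0 hσ1
    rw [hq_eval _ (ne_of_gt hx0), hkey θ hθ0 hθπ]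
    rw [abs_div, abs_neg, abs_of_pos hx0, div_le_iff₀ hx0]
    calc |(-1:ℝ)^(m+2) * d0 * ((1 + 2*σ*Real.cos θ + σ^2) * Real.cos (m*θ + 2*baiPg σ θ))|
        = d0 * ((1 + 2*σ*Real.cos θ + σ^2) * |Real.cos (m*θ + 2*baiPg σ θ)|) := by
          rw [abs_mul, abs_mul, abs_pow, abs_neg, abs_one, one_pow, one_mul,
            abs_of_pos hd00, abs_mul, abs_of_pos hApos]
      _ ≤ d0 * ((1 + 2*σ*Real.cos θ + σ^2) * 1) := by
          gcongr
          exact Real.abs_cos_le_one _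
      _ = E * xof θ := by rw [hExof θ]; ring
  -- equioscillation points
  have hpg_cont : Continuous (fun θ => baiPg σ θ) := by
    apply Real.continuous_arccos.comp
    apply Continuous.div
    · exact Real.continuous_cos.add continuous_const
    · exact Real.continuous_sqrt.comp
        ((continuous_const.add (continuous_const.mul Real.continuous_cos)).add continuous_const)
    · intro θ; exact ne_of_gt (Real.sqrt_pos.2 (bai_A_pos σ θ hσ0 hσ1))
  set Θf : ℝ → ℝ := fun θ => m*θ + 2*baiPg σ θ with hΘf_def
  have hΘcont : Continuous Θf := by
    apply Continuous.add
    · exact continuous_const.mul continuous_id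
    · exact continuous_const.mul hpg_cont
  have hpg0 : baiPg σ 0 = 0 := by
    rw [baiPg, Real.cos_zero]
    rw [show 1 + 2*σ*1 + σ^2 = (1+σ)^2 by ring, Real.sqrt_sq (by linarith : (0:ℝ) ≤ 1+σ)]
    rw [div_self (by linarith : (1:ℝ)+σ ≠ 0)]
    exact Real.arccos_one
  have hpgπ : baiPg σ π = π := by
    rw [baiPg, Real.cos_pi]
    rw [show 1 + 2*σ*(-1) + σ^2 = (1-σ)^2 by ring, Real.sqrt_sq (by linarith : (0:ℝ) ≤ 1-σ)]
    rw [show (-1 + σ)/(1-σ) = -1 by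
      rw [div_eq_iff (by linarith : (1:ℝ)-σ ≠ 0)]; ring]
    exact Real.arccos_neg_one
  have hΘ0 : Θf 0 = 0 := by simp [hΘf_def, hpg0]
  have hΘπ : Θf π = (m+2)*π := by
    simp only [hΘf_def, hpgπ]
    ring
  have hπpos := Real.pi_pos
  set Sj : ℕ → Set ℝ := fun j => Set.Icc 0 π ∩ {θ : ℝ | (j:ℝ)*π ≤ Θf θ} with hSj_def
  have hSclosed : ∀ j, IsClosed (Sj j) :=
    fun j => isClosed_Icc.inter (isClosed_le continuous_const hΘcont)
  have hSne : ∀ j, j ≤ m+2 → (Sj j).Nonempty := by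
    intro j hj
    refine ⟨π, ⟨hπpos.le, le_refl π⟩, ?_⟩
    show (j:ℝ)*π ≤ Θf π
    rw [hΘπ]
    have hjr : (j:ℝ) ≤ (m:ℝ)+2 := by exact_mod_cast hj
    exact mul_le_mul_of_nonneg_right hjr hπpos.le
  have hSbdd : ∀ j, BddBelow (Sj j) := fun j => ⟨0, fun θ hθ => hθ.1.1⟩
  set θj : ℕ → ℝ := fun j => sInf (Sj j) with hθj_def
  have hθj_mem : ∀ j, j ≤ m+2 → θj j ∈ Sj j :=
    fun j hj => (hSclosed j).csInf_mem (hSne j hj) (hSbdd j)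
  have hθj_Icc : ∀ j, j ≤ m+2 → θj j ∈ Set.Icc 0 π := fun j hj => (hθj_mem j hj).1
  have hθj_eq : ∀ j, j ≤ m+2 → Θf (θj j) = j*π := by
    intro j hj
    have hmem := hθj_mem j hj
    have h0θ : 0 ≤ θj j := hmem.1.1
    have hub : (j:ℝ)*π ≤ Θf (θj j) := hmem.2
    have hin : (j:ℝ)*π ∈ Set.Icc (Θf 0) (Θf (θj j)) := by
      constructor
      · rw [hΘ0]; positivity
      · exact hub
    obtain ⟨θ', hθ'mem, hθ'eq⟩ := intermediate_value_Icc h0θ hΘcont.continuousOn hin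
    have hθ'S : θ' ∈ Sj j := ⟨⟨hθ'mem.1, le_trans hθ'mem.2 hmem.1.2⟩, le_of_eq hθ'eq.symm⟩
    have h1 : θj j ≤ θ' := csInf_le (hSbdd j) hθ'S
    have h2 : θ' = θj j := le_antisymm hθ'mem.2 h1
    rw [← h2]
    exact hθ'eq
  have hθj_mono : ∀ j, j+1 ≤ m+2 → θj j < θj (j+1) := by
    intro j hj
    have hle : θj j ≤ θj (j+1) := by
      apply le_csInf (hSne (j+1) hj)
      intro b hb
      apply csInf_le (hSbdd j)
      refine ⟨hb.1, ?_⟩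
      have hb2 : ((j+1 : ℕ):ℝ)*π ≤ Θf b := hb.2
      push_cast at hb2
      show (j:ℝ)*π ≤ Θf b
      linarith [hπpos]
    rcases lt_or_eq_of_le hle with h | h
    · exact h
    · exfalso
      have e1 := hθj_eq j (by omega)
      have e2 := hθj_eq (j+1) hj
      rw [h] at e1
      rw [e1] at e2
      push_cast at e2
      nlinarith
  set xj : ℕ → ℝ := fun j => xof (θj j) with hxj_def
  have hxj_Icc : ∀ j, j ≤ m+2 → xj j ∈ Set.Icc ℓ r := by
    intro j hj
    have h1 := Real.neg_one_le_cos (θj j)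
    have h2 := Real.cos_le_one (θj j)
    simp only [hxj_def, hxof_def]
    constructor
    · nlinarith
    · nlinarith
  have hxj_pos : ∀ j, j ≤ m+2 → 0 < xj j := fun j hj => lt_of_lt_of_le hℓ (hxj_Icc j hj).1
  have hxj_anti : ∀ j, j+1 ≤ m+2 → xj (j+1) < xj j := by
    intro j hj
    have h1 := hθj_Icc j (by omega)
    have h2 := hθj_Icc (j+1) hj
    have h3 := Real.strictAntiOn_cos h1 h2 (hθj_mono j hj)
    simp only [hxj_def, hxof_def]
    nlinarith
  have hxj_le : ∀ i j, i ≤ j → j ≤ m+2 → xj j ≤ xj i := by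
    intro i j hij
    induction hij with
    | refl => intro _; exact le_refl _
    | @step k hk ih =>
      intro hj
      exact le_trans (hxj_anti k hj).le (ih (by omega))
  set η : ℝ := (-1:ℝ)^(m+1) with hη_def
  have hq_err : ∀ j, j ≤ m+2 → q.eval (xj j) - 1/(xj j) = η * (-1)^j * E := by
    intro j hj
    have hx0 := hxj_pos j hj
    have hIcc := hθj_Icc j hj
    have hApos := bai_A_pos σ (θj j) hσ0 hσ1
    have hcosΘ : Real.cos ((m:ℝ)*(θj j) + 2*baiPg σ (θj j)) = (-1:ℝ)^j := by
      have heq : (m:ℝ)*(θj j) + 2*baiPg σ (θj j) = Θf (θj j) := rfl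
      rw [heq, hθj_eq j hj]
      have := Real.cos_add_nat_mul_pi 0 j
      simpa using this
    have hx0' : (0:ℝ) < xof (θj j) := hxof_pos (θj j)
    simp only [hxj_def]
    rw [hq_eval _ (ne_of_gt hx0'), hkey (θj j) hIcc.1 hIcc.2, hcosΘ]
    have h2 := hExof (θj j)
    rw [div_eq_iff (ne_of_gt hx0')]
    have hη2 : η = -(-1:ℝ)^(m+2) := by
      rw [hη_def, pow_succ]
      ring
    calc -((-1:ℝ)^(m+2) * d0 * ((1 + 2*σ*Real.cos (θj j) + σ^2) * (-1)^j))
        = η * (-1)^j * (d0 * (1 + 2*σ*Real.cos (θj j) + σ^2)) := by rw [hη2]; ring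
      _ = η * (-1)^j * (E * xof (θj j)) := by rw [h2]
      _ = η * (-1)^j * E * xof (θj j) := by ring
  haveI hne_inst : Nonempty (Set.Icc ℓ r) := ⟨⟨ℓ, le_refl ℓ, hℓr.le⟩⟩
  have habsη : ∀ j : ℕ, |η * (-1:ℝ)^j| = 1 := by
    intro j
    rw [abs_mul, hη_def, abs_pow, abs_pow, abs_neg, abs_one, one_pow, one_pow, one_mul]
  have hsupq : (⨆ x : Set.Icc ℓ r, |q.eval (x:ℝ) - 1/(x:ℝ)|) = E := by
    apply le_antisymm
    · exact ciSup_le (fun x => hbound x x.2)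
    · have hval : |q.eval (xj 0) - 1/(xj 0)| = E := by
        rw [hq_err 0 (by omega), abs_mul, habsη 0, one_mul, abs_of_pos hE0]
      have hbA : BddAbove (Set.range fun x : Set.Icc ℓ r => |q.eval (x:ℝ) - 1/(x:ℝ)|) := by
        refine ⟨E, ?_⟩
        rintro v ⟨x, rfl⟩
        exact hbound x x.2
      calc E = |q.eval (xj 0) - 1/(xj 0)| := hval.symm
        _ ≤ _ := le_ciSup hbA (⟨xj 0, hxj_Icc 0 (by omega)⟩ : Set.Icc ℓ r)
  -- lower bound
  have hlower : ∀ p : Polynomial ℝ, p.natDegree ≤ m+1 →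
      E ≤ ⨆ x : Set.Icc ℓ r, |p.eval (x:ℝ) - 1/(x:ℝ)| := by
    intro p hdeg
    by_contra hcon
    push_neg at hcon
    have hbA : BddAbove (Set.range fun x : Set.Icc ℓ r => |p.eval (x:ℝ) - 1/(x:ℝ)|) := by
      have hcont : ContinuousOn (fun x : ℝ => |p.eval x - 1/x|) (Set.Icc ℓ r) := by
        apply ContinuousOn.abs
        apply ContinuousOn.sub p.continuousOn
        exact ContinuousOn.div continuousOn_const continuousOn_id
          (fun x hx => ne_of_gt (lt_of_lt_of_le hℓ hx.1))
      have h2 := (isCompact_Icc.image_of_continuousOn hcont).bddAbove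
      rwa [Set.image_eq_range] at h2
    have hple : ∀ j, j ≤ m+2 → |p.eval (xj j) - 1/(xj j)| < E := by
      intro j hj
      exact lt_of_le_of_lt (le_ciSup hbA (⟨xj j, hxj_Icc j hj⟩ : Set.Icc ℓ r)) hcon
    set D := q - p with hD_def
    have hD_deg : D.natDegree ≤ m+1 :=
      le_trans (Polynomial.natDegree_sub_le _ _) (max_le hq_deg hdeg)
    have hD_sign : ∀ j, j ≤ m+2 → 0 < η * (-1)^j * D.eval (xj j) := by
      intro j hj
      have h1 := hq_err j hj
      have h2 := hple j hj
      have h3 : D.eval (xj j) = (q.eval (xj j) - 1/(xj j)) - (p.eval (xj j) - 1/(xj j)) := by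
        simp [hD_def]
      have hx : η * (-1:ℝ)^j * (η * (-1)^j) = 1 := by
        have h5 : η * (-1:ℝ)^j = (-1:ℝ)^(m+1+j) := by rw [hη_def, ← pow_add]
        rw [h5, ← pow_add]
        exact Even.neg_one_pow ⟨m+1+j, by ring⟩
      have h6 : η * (-1:ℝ)^j * (p.eval (xj j) - 1/(xj j)) ≤ |p.eval (xj j) - 1/(xj j)| := by
        calc η * (-1:ℝ)^j * (p.eval (xj j) - 1/(xj j))
            ≤ |η * (-1:ℝ)^j * (p.eval (xj j) - 1/(xj j))| := le_abs_self _
          _ = |p.eval (xj j) - 1/(xj j)| := by rw [abs_mul, habsη j, one_mul]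
      have h7 : η * (-1:ℝ)^j * D.eval (xj j)
          = E - η * (-1:ℝ)^j * (p.eval (xj j) - 1/(xj j)) := by
        rw [h3, h1]
        linear_combination E * hx
      rw [h7]
      linarith
    have hDcont : Continuous (fun x : ℝ => D.eval x) := D.continuous
    have hroot : ∀ j, j+1 ≤ m+2 → ∃ y ∈ Set.Ioo (xj (j+1)) (xj j), D.eval y = 0 := by
      intro j hj
      have hs1' := hD_sign j (by omega)
      have hs2' := hD_sign (j+1) hj
      have hpow : η*(-1:ℝ)^(j+1) = -(η*(-1:ℝ)^j) := by rw [pow_succ]; ring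
      rw [hpow] at hs2'
      have hxlt := hxj_anti j hj
      rcases lt_trichotomy (η*(-1:ℝ)^j) 0 with hc | hc | hc
      · -- D(xj j) < 0 < D(xj (j+1))
        have ha : D.eval (xj j) < 0 := by nlinarith
        have hb : 0 < D.eval (xj (j+1)) := by nlinarith
        obtain ⟨y, hy1, hy2⟩ := intermediate_value_Ioo' hxlt.le hDcont.continuousOn
          (show (0:ℝ) ∈ Set.Ioo (D.eval (xj j)) (D.eval (xj (j+1))) from ⟨ha, hb⟩)
        exact ⟨y, hy1, hy2⟩
      · exfalso; rw [hc] at hs1'; simp at hs1'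
      · have ha : 0 < D.eval (xj j) := by nlinarith
        have hb : D.eval (xj (j+1)) < 0 := by nlinarith
        obtain ⟨y, hy1, hy2⟩ := intermediate_value_Ioo hxlt.le hDcont.continuousOn
          (show (0:ℝ) ∈ Set.Ioo (D.eval (xj (j+1))) (D.eval (xj j)) from ⟨hb, ha⟩)
        exact ⟨y, hy1, hy2⟩
    choose! yy hyy1 hyy2 using hroot
    have hD0 : D ≠ 0 := by
      intro h
      have h1 := hD_sign 0 (by omega)
      rw [h] at h1
      simp at h1
    have hdist : ∀ i j, i < j → j + 1 ≤ m+2 → yy j < yy i := by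
      intro i j hij hj
      have h1 := hyy1 j hj
      have h2 := hyy1 i (by omega)
      have h3 : xj j ≤ xj (i+1) := hxj_le (i+1) j hij (by omega)
      calc yy j < xj j := h1.2
        _ ≤ xj (i+1) := h3
        _ < yy i := h2.1
    have hinj : ∀ i, i < m+2 → ∀ j, j < m+2 → yy i = yy j → i = j := by
      intro i hi j hj hij
      rcases lt_trichotomy i j with h | h | h
      · exfalso; have := hdist i j h (by omega); linarith
      · exact h
      · exfalso; have := hdist j i h (by omega); linarith
    have hcard : (Finset.image yy (Finset.range (m+2))).card = m+2 := by
      rw [Finset.card_image_of_injOn, Finset.card_range]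
      intro i hi j hj h
      simp only [Finset.coe_range, Set.mem_Iio] at hi hj
      exact hinj i hi j hj h
    have hsub : Finset.image yy (Finset.range (m+2)) ⊆ D.roots.toFinset := by
      intro y hy
      rw [Finset.mem_image] at hy
      obtain ⟨j, hjmem, rfl⟩ := hy
      rw [Finset.mem_range] at hjmem
      rw [Multiset.mem_toFinset, Polynomial.mem_roots']
      exact ⟨hD0, hyy2 j (by omega)⟩
    have h8 : m+2 ≤ D.roots.toFinset.card := by
      rw [← hcard]; exact Finset.card_le_card hsub
    have h9 : D.roots.toFinset.card ≤ Multiset.card D.roots := D.roots.toFinset_card_le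
    have h10 := Polynomial.card_roots' D
    omega
  -- conclusion
  have hmem : E ∈ {e : ℝ | ∃ p : Polynomial ℝ, p.natDegree ≤ m+1 ∧
      e = ⨆ x : Set.Icc ℓ r, |Polynomial.eval (x:ℝ) p - 1/(x:ℝ)|} := ⟨q, hq_deg, hsupq.symm⟩
  have hlb : ∀ e ∈ {e : ℝ | ∃ p : Polynomial ℝ, p.natDegree ≤ m+1 ∧
      e = ⨆ x : Set.Icc ℓ r, |Polynomial.eval (x:ℝ) p - 1/(x:ℝ)|}, E ≤ e := by
    rintro e ⟨p, hp1, rfl⟩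
    exact hlower p hp1
  have hinf : sInf {e : ℝ | ∃ p : Polynomial ℝ, p.natDegree ≤ m+1 ∧
      e = ⨆ x : Set.Icc ℓ r, |Polynomial.eval (x:ℝ) p - 1/(x:ℝ)|} = E :=
    le_antisymm (csInf_le ⟨E, hlb⟩ hmem) (le_csInf ⟨E, hmem⟩ hlb)
  rw [hinf, hE_def]
  have hσexp : 1 - 2*s/(1+s) = σ := by
    rw [hσ_def]
    field_simp
    ring
  rw [hσexp]
  ring
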